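/- The determinant of the Jacobian matrix (∂c_i/∂x_j), where c_i is the i-th elementary symmetric polynomial in x_1,…,x_p, equals the Vandermonde product ∏_{i<j}(x_i − x_j). -/

import Mathlib

open MvPolynomial Finset


lemma aux_pderiv_prod_X {p : ℕ} {R : Type*} [CommRing R] (t : Finset (Fin p)) (j : Fin p) :
    pderiv j (∏ i ∈ t, (X i : MvPolynomial (Fin p) R)) =
      if j ∈ t then ∏ i ∈ t.erase j, (X i : MvPolynomial (Fin p) R) else 0 := by
  have hm : ∀ (u : Finset (Fin p)), (∏ i ∈ u, (X i : MvPolynomial (Fin p) R)) =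
      monomial (∑ i ∈ u, Finsupp.single i 1) 1 := by
    intro u
    rw [monomial_sum_one]
    rfl
  rw [hm, pderiv_monomial]
  have hs : (∑ i ∈ t, Finsupp.single i 1 : Fin p →₀ ℕ) j = if j ∈ t then 1 else 0 := by
    rw [Finsupp.finset_sum_apply]
    simp [Finsupp.single_apply, eq_comm]
  by_cases hj : j ∈ t
  · rw [if_pos hj, hs, if_pos hj, hm]
    congr 1
    · rw [← Finset.add_sum_erase _ _ hj]
      ext k
      simp
    · simp
  · rw [if_neg hj, hs, if_neg hj]
    simp

lemma aux_pderiv_esymm {p : ℕ} {R : Type*} [CommRing R] (j : Fin p) (k : ℕ) :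
    pderiv j (esymm (Fin p) R (k + 1)) =
      ∑ t ∈ Finset.powersetCard k (Finset.univ.erase j), ∏ i ∈ t, (X i : MvPolynomial (Fin p) R)
      := by
  rw [esymm, map_sum]
  simp_rw [aux_pderiv_prod_X]
  rw [Finset.sum_ite, Finset.sum_const_zero, add_zero]
  refine Finset.sum_bij' (fun t _ => t.erase j) (fun u _ => insert j u) ?_ ?_ ?_ ?_ ?_
  · intro t ht
    simp only [Finset.mem_filter, Finset.mem_powersetCard] at ht ⊢
    refine ⟨fun x hx => ?_, ?_⟩
    · rw [Finset.mem_erase] at hx ⊢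
      exact ⟨hx.1, Finset.mem_univ _⟩
    · rw [Finset.card_erase_of_mem ht.2, ht.1.2]; rfl
  · intro u hu
    rw [Finset.mem_powersetCard] at hu
    have hj : j ∉ u := fun h => (Finset.mem_erase.mp (hu.1 h)).1 rfl
    simp only [Finset.mem_filter, Finset.mem_powersetCard]
    exact ⟨⟨fun x _ => Finset.mem_univ _, by rw [Finset.card_insert_of_notMem hj, hu.2]⟩,
      Finset.mem_insert_self _ _⟩
  · intro t ht
    simp only [Finset.mem_filter] at ht
    exact Finset.insert_erase ht.2
  · intro u hu
    rw [Finset.mem_powersetCard] at hu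
    have hj : j ∉ u := fun h => (Finset.mem_erase.mp (hu.1 h)).1 rfl
    exact Finset.erase_insert hj
  · intro t ht
    rfl

lemma aux_prod_sub {p : ℕ} {R : Type*} [CommRing R] (s : Finset (Fin p))
    (y : MvPolynomial (Fin p) R) :
    ∏ k ∈ s, (X k - y) =
      ∑ i ∈ Finset.range (s.card + 1),
        (∑ t ∈ Finset.powersetCard i s, ∏ k ∈ t, (X k : MvPolynomial (Fin p) R))
          * (-y) ^ (s.card - i) := by
  have h := Finset.prod_add (fun k => (X k : MvPolynomial (Fin p) R)) (fun _ => -y) s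
  simp only [sub_eq_add_neg]
  rw [h, Finset.powerset_card_disjiUnion]
  refine (Finset.sum_disjiUnion _ _ _).trans ?_
  refine Finset.sum_congr rfl fun i _ => ?_
  rw [Finset.sum_mul]
  refine Finset.sum_congr rfl fun t ht => ?_
  rw [Finset.mem_powersetCard] at ht
  rw [Finset.prod_const, Finset.card_sdiff_of_subset ht.1, ht.2]

-- determinant of the reversed Vandermonde matrix
lemma aux_det_W {p : ℕ} {R : Type*} [CommRing R] (x : Fin p → R) :
    Matrix.det (Matrix.of fun m i : Fin p => x m ^ (p - 1 - (i : ℕ))) =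
      ∏ i : Fin p, ∏ j ∈ Finset.Ioi i, (x i - x j) := by
  have hW : (Matrix.of fun m i : Fin p => x m ^ (p - 1 - (i : ℕ))) =
      (Matrix.vandermonde (fun m => x (Fin.rev m))).submatrix Fin.revPerm Fin.revPerm := by
    ext m i
    simp only [Matrix.submatrix_apply, Matrix.vandermonde, Matrix.of_apply, Fin.rev_rev,
      Fin.revPerm_apply]
    congr 1
    rw [Fin.val_rev]
    omega
  rw [hW, Matrix.det_submatrix_equiv_self, Matrix.det_vandermonde]
  -- ∏ i, ∏ j ∈ Ioi i, (x (rev j) - x (rev i)) = ∏ i, ∏ j ∈ Ioi i, (x i - x j)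
  have h1 : ∀ i : Fin p, ∏ j ∈ Finset.Ioi i, (x (Fin.rev j) - x (Fin.rev i)) =
      ∏ j ∈ Finset.Iio (Fin.rev i), (x j - x (Fin.rev i)) := by
    intro i
    refine Finset.prod_nbij' Fin.rev Fin.rev ?_ ?_ ?_ ?_ ?_ <;>
      simp +contextual [Finset.mem_Ioi, Finset.mem_Iio, Fin.rev_lt_rev, Fin.lt_rev_iff,
        Fin.rev_lt_iff]
  simp_rw [h1]
  rw [show (∏ i : Fin p, ∏ j ∈ Finset.Iio (Fin.rev i), (x j - x (Fin.rev i))) =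
      ∏ a : Fin p, ∏ j ∈ Finset.Iio a, (x j - x a) from
    Equiv.prod_comp Fin.revPerm (fun a => ∏ j ∈ Finset.Iio a, (x j - x a))]
  refine (Finset.prod_comm' (fun a b => ?_)).symm
  simp [Finset.mem_Ioi, Finset.mem_Iio, and_comm]

lemma aux_entry {p : ℕ} {R : Type*} [CommRing R] (m j : Fin p) :
    ∑ i : Fin p, (-(X m : MvPolynomial (Fin p) R)) ^ (p - 1 - (i : ℕ)) *
        pderiv j (esymm (Fin p) R ((i : ℕ) + 1)) =
      ∏ k ∈ Finset.univ.erase j, (X k - X m) := by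
  have hcard : (Finset.univ.erase j).card = p - 1 := by
    rw [Finset.card_erase_of_mem (Finset.mem_univ _), Finset.card_univ, Fintype.card_fin]
  have hp : 1 ≤ p := j.pos
  rw [aux_prod_sub, hcard]
  rw [Nat.sub_add_cancel hp]
  rw [← Fin.sum_univ_eq_sum_range (fun i =>
    (∑ t ∈ Finset.powersetCard i (Finset.univ.erase j), ∏ k ∈ t, (X k : MvPolynomial (Fin p) R))
      * (-(X m)) ^ (p - 1 - i)) p]
  refine Finset.sum_congr rfl fun i _ => ?_
  rw [aux_pderiv_esymm, mul_comm]

theorem jacobian_esymm_det_int (p : ℕ) :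
    (Matrix.of fun i j : Fin p =>
        MvPolynomial.pderiv j (MvPolynomial.esymm (Fin p) ℤ ((i : ℕ) + 1))).det =
      ∏ i : Fin p, ∏ j ∈ Finset.Ioi i, (X i - X j) := by
  have S := MvPolynomial (Fin p) ℤ
  set M : Matrix (Fin p) (Fin p) (MvPolynomial (Fin p) ℤ) :=
    Matrix.of fun i j : Fin p => pderiv j (esymm (Fin p) ℤ ((i : ℕ) + 1)) with hM
  set V : Matrix (Fin p) (Fin p) (MvPolynomial (Fin p) ℤ) :=
    Matrix.of fun m i : Fin p => (-(X m : MvPolynomial (Fin p) ℤ)) ^ (p - 1 - (i : ℕ)) with hV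
  set v : MvPolynomial (Fin p) ℤ := ∏ i : Fin p, ∏ j ∈ Finset.Ioi i, (X i - X j) with hv
  set c : MvPolynomial (Fin p) ℤ := ∏ i : Fin p, (-1 : MvPolynomial (Fin p) ℤ) ^ (p - 1 - (i : ℕ)) with hc
  -- V * M is diagonal
  have hVM : V * M = Matrix.diagonal fun j => ∏ k ∈ Finset.univ.erase j, (X k - X j) := by
    refine Matrix.ext fun m j => ?_
    rw [Matrix.mul_apply]
    have := aux_entry (R := ℤ) m j
    simp only [hV, hM, Matrix.of_apply] at this ⊢
    rw [this]
    by_cases h : m = j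
    · subst h; rw [Matrix.diagonal_apply_eq]
    · rw [Matrix.diagonal_apply_ne _ h]
      have hz : ((X m : MvPolynomial (Fin p) ℤ) - X m) = 0 := sub_self _
      exact Finset.prod_eq_zero (f := fun k => (X k : MvPolynomial (Fin p) ℤ) - X m)
        (Finset.mem_erase.mpr ⟨h, Finset.mem_univ m⟩) hz
  -- det V = c * v
  have hdetV : V.det = c * v := by
    have h2 : V = Matrix.of fun m i : Fin p =>
        ((-1 : MvPolynomial (Fin p) ℤ) ^ (p - 1 - (i : ℕ))) *
          ((X m : MvPolynomial (Fin p) ℤ) ^ (p - 1 - (i : ℕ))) := by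
      ext m i
      rw [hV]
      simp only [Matrix.of_apply]
      rw [← neg_one_mul, mul_pow]
    rw [h2]
    refine (Matrix.det_mul_row (fun i : Fin p => (-1 : MvPolynomial (Fin p) ℤ) ^ (p - 1 - (i : ℕ)))
      (Matrix.of fun m i : Fin p => (X m : MvPolynomial (Fin p) ℤ) ^ (p - 1 - (i : ℕ)))).trans ?_
    congr 1
    exact aux_det_W fun m => (X m : MvPolynomial (Fin p) ℤ)
  -- the diagonal product
  have herase : ∀ j : Fin p, Finset.univ.erase j =
      (Finset.Ioi j).disjUnion (Finset.Iio j) (Finset.disjoint_Ioi_Iio j) := by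
    intro j
    ext k
    simp only [Finset.mem_erase, Finset.mem_univ, and_true, Finset.mem_disjUnion,
      Finset.mem_Ioi, Finset.mem_Iio]
    rw [Fin.lt_def, Fin.lt_def, Ne, Fin.ext_iff]
    omega
  have hIoi : (∏ j : Fin p, ∏ k ∈ Finset.Ioi j, ((X k : MvPolynomial (Fin p) ℤ) - X j)) = c * v := by
    have h3 : ∀ j : Fin p, (∏ k ∈ Finset.Ioi j, ((X k : MvPolynomial (Fin p) ℤ) - X j)) =
        (-1 : MvPolynomial (Fin p) ℤ) ^ (p - 1 - (j : ℕ)) *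
          ∏ k ∈ Finset.Ioi j, ((X j : MvPolynomial (Fin p) ℤ) - X k) := by
      intro j
      calc (∏ k ∈ Finset.Ioi j, ((X k : MvPolynomial (Fin p) ℤ) - X j))
          = ∏ k ∈ Finset.Ioi j, ((-1 : MvPolynomial (Fin p) ℤ) *
              ((X j : MvPolynomial (Fin p) ℤ) - X k)) :=
            Finset.prod_congr rfl fun k _ => by ring
        _ = (∏ _k ∈ Finset.Ioi j, (-1 : MvPolynomial (Fin p) ℤ)) *
              ∏ k ∈ Finset.Ioi j, ((X j : MvPolynomial (Fin p) ℤ) - X k) :=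
            Finset.prod_mul_distrib
        _ = _ := by rw [Finset.prod_const, Fin.card_Ioi]
    simp_rw [h3]
    rw [Finset.prod_mul_distrib]
  have hIio : (∏ j : Fin p, ∏ k ∈ Finset.Iio j, ((X k : MvPolynomial (Fin p) ℤ) - X j)) = v := by
    rw [hv]
    refine (Finset.prod_comm' fun a b => ?_).symm
    simp [and_comm]
  have hdiag : (∏ j : Fin p, ∏ k ∈ Finset.univ.erase j, ((X k : MvPolynomial (Fin p) ℤ) - X j)) = c * v * v := by
    calc (∏ j : Fin p, ∏ k ∈ Finset.univ.erase j, ((X k : MvPolynomial (Fin p) ℤ) - X j))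
        = ∏ j : Fin p, ((∏ k ∈ Finset.Ioi j, ((X k : MvPolynomial (Fin p) ℤ) - X j)) *
            (∏ k ∈ Finset.Iio j, ((X k : MvPolynomial (Fin p) ℤ) - X j))) := by
          refine Finset.prod_congr rfl fun j _ => ?_
          rw [herase j, Finset.prod_disjUnion]
      _ = c * v * v := by rw [Finset.prod_mul_distrib, hIoi, hIio]
  -- nonvanishing
  have hvne : v ≠ 0 := by
    rw [hv, Finset.prod_ne_zero_iff]
    intro i _
    rw [Finset.prod_ne_zero_iff]
    intro j hj
    rw [Finset.mem_Ioi] at hj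
    exact sub_ne_zero_of_ne fun h => absurd (MvPolynomial.X_injective h) (ne_of_lt hj)
  have hcc : c * c = 1 := by
    rw [hc, ← Finset.prod_mul_distrib]
    refine Finset.prod_eq_one fun i _ => ?_
    rw [← mul_pow]
    norm_num
  have hcvne : c * v ≠ 0 := by
    intro h
    apply hvne
    calc v = c * c * v := by rw [hcc, one_mul]
      _ = c * (c * v) := by ring
      _ = 0 := by rw [h, mul_zero]
  -- put it together
  have hdet : c * v * M.det = c * v * v := by
    calc c * v * M.det = V.det * M.det := by rw [hdetV]
      _ = (V * M).det := (Matrix.det_mul _ _).symm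
      _ = c * v * v := by rw [hVM, Matrix.det_diagonal, hdiag]
  exact mul_left_cancel₀ hcvne hdet

theorem jacobian_esymm_det (p : ℕ) (R : Type*) [CommRing R] :
    (Matrix.of fun i j : Fin p =>
        MvPolynomial.pderiv j (MvPolynomial.esymm (Fin p) R ((i : ℕ) + 1))).det =
      ∏ i : Fin p, ∏ j ∈ Finset.Ioi i, (X i - X j) := by
  have hmap : (Matrix.of fun i j : Fin p =>
      MvPolynomial.pderiv j (MvPolynomial.esymm (Fin p) R ((i : ℕ) + 1))) =
      (Matrix.of fun i j : Fin p =>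
        MvPolynomial.pderiv j (MvPolynomial.esymm (Fin p) ℤ ((i : ℕ) + 1))).map
        (MvPolynomial.map (Int.castRingHom R)) := by
    refine Matrix.ext fun i j => ?_
    simp only [Matrix.map_apply, Matrix.of_apply]
    rw [← pderiv_map, map_esymm]
  rw [hmap]
  rw [show ((Matrix.of fun i j : Fin p =>
        MvPolynomial.pderiv j (MvPolynomial.esymm (Fin p) ℤ ((i : ℕ) + 1))).map
        (MvPolynomial.map (Int.castRingHom R))).det
      = MvPolynomial.map (Int.castRingHom R) ((Matrix.of fun i j : Fin p =>
        MvPolynomial.pderiv j (MvPolynomial.esymm (Fin p) ℤ ((i : ℕ) + 1))).det) from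
    (RingHom.map_det (MvPolynomial.map (Int.castRingHom R)) _).symm]
  rw [show ((Matrix.of fun i j : Fin p =>
      MvPolynomial.pderiv j (MvPolynomial.esymm (Fin p) ℤ ((i : ℕ) + 1))).det)
    = ∏ i : Fin p, ∏ j ∈ Finset.Ioi i, (X i - X j) from jacobian_esymm_det_int p]
  rw [map_prod]
  refine Finset.prod_congr rfl fun i _ => ?_
  rw [map_prod]
  refine Finset.prod_congr rfl fun j _ => ?_
  simp
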